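/- For the step distribution D(x) = (2d)^{-1} 𝟙{|x|₁ = 1} of simple random walk on ℤ^d and for all k, l ∈ ℝ^d, one has |∑_x cos(l·x)(1 - cos(k·x)) D(x)| ≤ 1 - D̂(k), where D̂(k) = ∑_x cos(k·x) D(x). -/

import Mathlib

/-- The step distribution of simple random walk on `ℤ^d`:
`D(x) = (2d)⁻¹ 𝟙{|x|₁ = 1}`. -/
noncomputable def stepD (d : ℕ) (x : Fin d → ℤ) : ℝ :=
  if (∑ i, (x i).natAbs) = 1 then 1 / (2 * d) else 0

open Finset Real

/-- The finite set containing the support of `stepD`. -/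
def unitVecs (d : ℕ) : Finset (Fin d → ℤ) :=
  (Finset.univ : Finset (Fin d × Bool)).image
    fun p => fun j => if j = p.1 then (if p.2 then 1 else -1) else 0

lemma mem_unitVecs {d : ℕ} {x : Fin d → ℤ} (h : (∑ i, (x i).natAbs) = 1) :
    x ∈ unitVecs d := by
  obtain ⟨i, -, hi⟩ := Finset.exists_ne_zero_of_sum_ne_zero
    (by omega : (∑ i, (x i).natAbs) ≠ 0)
  have hle : (x i).natAbs ≤ 1 := h ▸ Finset.single_le_sum
    (f := fun i => (x i).natAbs) (fun _ _ => Nat.zero_le _) (mem_univ i)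
  have hi1 : (x i).natAbs = 1 := by omega
  have hrest : ∀ j, j ≠ i → x j = 0 := by
    intro j hj
    have h0 : ∑ j ∈ univ.erase i, (x j).natAbs = 0 := by
      have h2 : ∑ j ∈ univ.erase i, (x j).natAbs + (x i).natAbs = 1 := by
        rw [Finset.sum_erase_add _ _ (mem_univ i)]; exact h
      omega
    have := (Finset.sum_eq_zero_iff).mp h0 j (by simp [hj])
    omega
  rcases Int.natAbs_eq_iff.mp hi1 with h1 | h1
  · refine Finset.mem_image.mpr ⟨(i, true), mem_univ _, ?_⟩
    funext j
    by_cases hji : j = i <;> simp [hji, h1, hrest j]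
  · refine Finset.mem_image.mpr ⟨(i, false), mem_univ _, ?_⟩
    funext j
    by_cases hji : j = i <;> simp [hji, h1, hrest j]

lemma stepD_nonneg (d : ℕ) (x : Fin d → ℤ) : 0 ≤ stepD d x := by
  rw [stepD]; split <;> positivity

lemma stepD_le (d : ℕ) (x : Fin d → ℤ) : stepD d x ≤ 1 / (2 * d) := by
  rw [stepD]; split
  · exact le_refl _
  · positivity

lemma sum_stepD_le (d : ℕ) (hd : 0 < d) : ∑ x ∈ unitVecs d, stepD d x ≤ 1 := by
  have hcard : (unitVecs d).card ≤ 2 * d := by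
    have := Finset.card_image_le (s := (Finset.univ : Finset (Fin d × Bool)))
      (f := fun p => fun j : Fin d => if j = p.1 then (if p.2 then 1 else (-1 : ℤ)) else 0)
    simpa [mul_comm, unitVecs] using this
  calc ∑ x ∈ unitVecs d, stepD d x ≤ ∑ _x ∈ unitVecs d, 1 / (2 * (d : ℝ)) :=
        Finset.sum_le_sum fun x _ => stepD_le d x
    _ = (unitVecs d).card * (1 / (2 * (d : ℝ))) := by rw [Finset.sum_const, nsmul_eq_mul]
    _ ≤ (2 * d) * (1 / (2 * (d : ℝ))) := by
        apply mul_le_mul_of_nonneg_right _ (by positivity)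
        exact_mod_cast hcard
    _ = 1 := by field_simp

theorem fourier_Dk_bound (d : ℕ) (hd : 0 < d) (k l : Fin d → ℝ) :
    |∑' x : Fin d → ℤ,
        Real.cos (∑ i, l i * (x i : ℝ)) * (1 - Real.cos (∑ i, k i * (x i : ℝ))) * stepD d x| ≤
      1 - ∑' x : Fin d → ℤ, Real.cos (∑ i, k i * (x i : ℝ)) * stepD d x := by
  have hsupp : ∀ x ∉ unitVecs d, stepD d x = 0 := by
    intro x hx
    rw [stepD, if_neg]
    intro h; exact hx (mem_unitVecs h)
  rw [tsum_eq_sum (s := unitVecs d) (fun x hx => by rw [hsupp x hx, mul_zero]),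
      tsum_eq_sum (s := unitVecs d) (fun x hx => by rw [hsupp x hx, mul_zero])]
  have key : |∑ x ∈ unitVecs d,
      Real.cos (∑ i, l i * (x i : ℝ)) * (1 - Real.cos (∑ i, k i * (x i : ℝ))) * stepD d x|
      ≤ ∑ x ∈ unitVecs d, (1 - Real.cos (∑ i, k i * (x i : ℝ))) * stepD d x := by
    refine (Finset.abs_sum_le_sum_abs _ _).trans (Finset.sum_le_sum fun x _ => ?_)
    have h1 : 0 ≤ 1 - Real.cos (∑ i, k i * (x i : ℝ)) := by
      have := Real.cos_le_one (∑ i, k i * (x i : ℝ)); linarith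
    rw [abs_mul, abs_mul, abs_of_nonneg h1, abs_of_nonneg (stepD_nonneg d x)]
    have h2 := Real.abs_cos_le_one (∑ i, l i * (x i : ℝ))
    have h3 := abs_nonneg (Real.cos (∑ i, l i * (x i : ℝ)))
    nlinarith [mul_nonneg (mul_nonneg (sub_nonneg.mpr h2) h1) (stepD_nonneg d x)]
  refine key.trans ?_
  have expand : ∑ x ∈ unitVecs d, (1 - Real.cos (∑ i, k i * (x i : ℝ))) * stepD d x
      = ∑ x ∈ unitVecs d, stepD d x
        - ∑ x ∈ unitVecs d, Real.cos (∑ i, k i * (x i : ℝ)) * stepD d x := by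
    rw [← Finset.sum_sub_distrib]
    exact Finset.sum_congr rfl fun x _ => by ring
  rw [expand]
  have := sum_stepD_le d hd
  linarith
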